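/- Let E be a finite-dimensional real normed space, T ⊆ ℝ an interval, and X : ℝ × E → E such that: (a) t ↦ X(t, x) is measurable for every x ∈ E; (b) x ↦ X(t, x) is continuous for every t ∈ T; (c) for every compact subinterval S ⊆ T and every compact K ⊆ E there exist integrable functions h, ℓ : S → ℝ with ‖X(t, x)‖ ≤ h(t) and ‖X(t, x1) − X(t, x2)‖ ≤ ℓ(t) ‖x1 − x2‖ for all t ∈ S and x, x1, x2 ∈ K. Call ξ a solution through (t0, x) on a subinterval J ⊆ T containing t0 if ξ : J → E is continuous, ξ(t0) = x, u ↦ X(u, ξ(u)) is integrable on every compact subinterval of J, and ξ(t) = x + ∫_{t0}^{t} X(u, ξ(u)) du for all t ∈ J. Define D_X := { (t1, t0, x) ∈ T × T × E : there is a solution through (t0, x) on a subinterval of T containing both t0 and t1 }. Then: (1) any two solutions through the same (t0, x) agree on the intersection of their domains; (2) D_X is open in T × T × E (subspace topology); (3) the map Φ : D_X → E defined by Φ(t1, t0, x) := ξ(t1), for any solution ξ through (t0, x) defined at t1, is well defined and continuous. -/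

import Mathlib

open Set MeasureTheory intervalIntegral

set_option linter.unusedSectionVars false
set_option linter.unusedVariables false
set_option maxHeartbeats 1000000

open scoped Interval

/-- `ξ` is a solution of the time-varying vector field `X` through `(t0, x)` on the
subinterval `J` of the interval `T`. -/
def IsSolutionOn {E : Type*} [NormedAddCommGroup E] [NormedSpace ℝ E]
    (T : Set ℝ) (X : ℝ → E → E) (t0 : ℝ) (x : E) (J : Set ℝ) (ξ : ℝ → E) : Prop :=
  J ⊆ T ∧ J.OrdConnected ∧ t0 ∈ J ∧ ContinuousOn ξ J ∧ ξ t0 = x ∧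
    (∀ a b : ℝ, Icc a b ⊆ J → IntegrableOn (fun u => X u (ξ u)) (Icc a b)) ∧
    ∀ t ∈ J, ξ t = x + ∫ u in t0..t, X u (ξ u)

section Aux
variable {E : Type*} [NormedAddCommGroup E] [NormedSpace ℝ E] [FiniteDimensional ℝ E]
  [MeasurableSpace E] [BorelSpace E]
variable {T : Set ℝ} {X : ℝ → E → E}

lemma aux_meas (hT : T.OrdConnected) (hXmeas : ∀ x : E, Measurable fun t => X t x)
    (hXcont : ∀ t ∈ T, Continuous fun x => X t x)
    {f : ℝ → E} {s : Set ℝ} (hs : MeasurableSet s) (hsT : s ⊆ T)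
    (hf : AEMeasurable f (volume.restrict s)) :
    AEStronglyMeasurable (fun u => X u (f u)) (volume.restrict s) := by
  classical
  set X' : E → ℝ → E := fun y t => if t ∈ T then X t y else 0 with hX'
  have hcont : ∀ t : ℝ, Continuous fun y => X' y t := by
    intro t
    by_cases ht : t ∈ T
    · simpa [X', ht] using hXcont t ht
    · simpa [X', ht] using (continuous_const : Continuous fun _ : E => (0 : E))
  have hmeas : ∀ y : E, Measurable (X' y) := fun y =>
    Measurable.ite hT.measurableSet (hXmeas y) measurable_const
  have huncurry : Measurable (Function.uncurry X') :=
    measurable_uncurry_of_continuous_of_measurable hcont hmeas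
  have h1 : AEMeasurable (fun u => X' (f u) u) (volume.restrict s) :=
    huncurry.comp_aemeasurable (hf.prodMk aemeasurable_id)
  have h2 : (fun u => X' (f u) u) =ᵐ[volume.restrict s] fun u => X u (f u) :=
    (ae_restrict_mem hs).mono fun u hu => by simp [X', hsT hu]
  exact (h1.congr h2).aestronglyMeasurable

lemma integrand_int (hT : T.OrdConnected) (hXmeas : ∀ x : E, Measurable fun t => X t x)
    (hXcont : ∀ t ∈ T, Continuous fun x => X t x)
    {c d : ℝ} (hsub : Icc c d ⊆ T)
    {η : ℝ → E} (hη : ContinuousOn η (Icc c d))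
    {K' : Set E} {h : ℝ → ℝ} (hhi : IntegrableOn h (Icc c d))
    (hmem : ∀ t ∈ Icc c d, η t ∈ K')
    (hh : ∀ t ∈ Icc c d, ∀ y ∈ K', ‖X t y‖ ≤ h t) :
    IntegrableOn (fun u => X u (η u)) (Icc c d) := by
  have hsm := aux_meas hT hXmeas hXcont measurableSet_Icc hsub
    (hη.aemeasurable measurableSet_Icc)
  refine Integrable.mono' hhi hsm ?_
  filter_upwards [ae_restrict_mem measurableSet_Icc] with u hu
  exact hh u hu _ (hmem u hu)

lemma IsSolutionOn.intervalIntegrableX {t0 : ℝ} {x : E} {J : Set ℝ} {ξ : ℝ → E}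
    (hs : IsSolutionOn T X t0 x J ξ) {a b : ℝ} (ha : a ∈ J) (hb : b ∈ J) :
    IntervalIntegrable (fun u => X u (ξ u)) volume a b := by
  obtain ⟨-, hJ, -, -, -, hint, -⟩ := hs
  rcases le_total a b with hab | hab
  · have := hint a b (hJ.out ha hb)
    rw [← uIcc_of_le hab] at this
    exact this.intervalIntegrable
  · have := hint b a (hJ.out hb ha)
    rw [← uIcc_of_le hab, uIcc_comm] at this
    exact this.intervalIntegrable

lemma IsSolutionOn.shift {t0 : ℝ} {x : E} {J : Set ℝ} {ξ : ℝ → E}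
    (hs : IsSolutionOn T X t0 x J ξ) {s t : ℝ} (hsJ : s ∈ J) (htJ : t ∈ J) :
    ξ t = ξ s + ∫ u in s..t, X u (ξ u) := by
  have ht0 : t0 ∈ J := hs.2.2.1
  have h1 := hs.2.2.2.2.2.2 t htJ
  have h2 := hs.2.2.2.2.2.2 s hsJ
  have key := integral_interval_sub_left (hs.intervalIntegrableX ht0 htJ)
    (hs.intervalIntegrableX ht0 hsJ)
  rw [h1, h2, ← key]
  abel

lemma IsSolutionOn.rebase {t0 : ℝ} {x : E} {J : Set ℝ} {ξ : ℝ → E}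
    (hs : IsSolutionOn T X t0 x J ξ) {t' : ℝ} (ht' : t' ∈ J) :
    IsSolutionOn T X t' (ξ t') J ξ :=
  ⟨hs.1, hs.2.1, ht', hs.2.2.2.1, rfl, hs.2.2.2.2.2.1, fun t ht => hs.shift ht' ht⟩

lemma IsSolutionOn.mono {t0 : ℝ} {x : E} {J : Set ℝ} {ξ : ℝ → E}
    (hs : IsSolutionOn T X t0 x J ξ) {S : Set ℝ} (hS : S ⊆ J) (hSo : S.OrdConnected)
    (ht0 : t0 ∈ S) : IsSolutionOn T X t0 x S ξ :=
  ⟨hS.trans hs.1, hSo, ht0, hs.2.2.2.1.mono hS, hs.2.2.2.2.1,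
    fun a b hab => hs.2.2.2.2.2.1 a b (hab.trans hS), fun t ht => hs.2.2.2.2.2.2 t (hS ht)⟩


/-- Gluing two solutions that share the junction point `m`. -/
lemma glue_mid {c m d : ℝ} (hcm : c ≤ m) (hmd : m ≤ d)
    {η₁ η₂ : ℝ → E}
    (h1 : IsSolutionOn T X m (η₁ m) (Icc c m) η₁)
    (h2 : IsSolutionOn T X m (η₁ m) (Icc m d) η₂) :
    ∃ η, IsSolutionOn T X m (η₁ m) (Icc c d) η ∧
      (∀ t ∈ Icc c m, η t = η₁ t) ∧ (∀ t ∈ Icc m d, η t = η₂ t) := by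
  classical
  set η : ℝ → E := fun t => if t ≤ m then η₁ t else η₂ t with hη
  have hmm : m ∈ Icc c m := ⟨hcm, le_rfl⟩
  have h2m : η₂ m = η₁ m := h2.2.2.2.2.1
  have e1 : ∀ t ∈ Icc c m, η t = η₁ t := fun t ht => if_pos ht.2
  have e2 : ∀ t ∈ Icc m d, η t = η₂ t := by
    intro t ht
    by_cases h : t ≤ m
    · have : t = m := le_antisymm h ht.1
      subst this
      simp [η, h2m]
    · simp [η, h]
  have hXeq1 : EqOn (fun u => X u (η₁ u)) (fun u => X u (η u)) (Icc c m) := by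
    intro u hu; simp only []; rw [e1 u hu]
  have hXeq2 : EqOn (fun u => X u (η₂ u)) (fun u => X u (η u)) (Icc m d) := by
    intro u hu; simp only []; rw [e2 u hu]
  have hcont : ContinuousOn η (Icc c d) := by
    rw [← Icc_union_Icc_eq_Icc hcm hmd]
    intro t ht
    apply ContinuousWithinAt.union
    · by_cases h : t ∈ Icc c m
      · exact ((h1.2.2.2.1 t h).congr (fun y hy => e1 y hy) (e1 t h))
      · exact continuousWithinAt_of_notMem_closure (by rwa [isClosed_Icc.closure_eq])
    · by_cases h : t ∈ Icc m d
      · exact ((h2.2.2.2.1 t h).congr (fun y hy => e2 y hy) (e2 t h))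
      · exact continuousWithinAt_of_notMem_closure (by rwa [isClosed_Icc.closure_eq])
  have hint1 : IntegrableOn (fun u => X u (η u)) (Icc c m) :=
    (h1.2.2.2.2.2.1 c m subset_rfl).congr_fun hXeq1 measurableSet_Icc
  have hint2 : IntegrableOn (fun u => X u (η u)) (Icc m d) :=
    (h2.2.2.2.2.2.1 m d subset_rfl).congr_fun hXeq2 measurableSet_Icc
  have hint : IntegrableOn (fun u => X u (η u)) (Icc c d) := by
    rw [← Icc_union_Icc_eq_Icc hcm hmd]
    exact hint1.union hint2
  have hηm : η m = η₁ m := e1 m hmm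
  have heq : ∀ t ∈ Icc c d, η t = η₁ m + ∫ u in m..t, X u (η u) := by
    intro t ht
    by_cases h : t ≤ m
    · have htm : t ∈ Icc c m := ⟨ht.1, h⟩
      rw [e1 t htm, h1.2.2.2.2.2.2 t htm]
      congr 1
      apply integral_congr
      intro u hu
      rw [uIcc_of_ge h] at hu
      exact hXeq1 ⟨le_trans ht.1 hu.1, hu.2⟩
    · have hmt : m ≤ t := le_of_not_ge h
      have htm : t ∈ Icc m d := ⟨hmt, ht.2⟩
      rw [e2 t htm, h2.2.2.2.2.2.2 t htm]
      congr 1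
      apply integral_congr
      intro u hu
      rw [uIcc_of_le hmt] at hu
      exact hXeq2 ⟨hu.1, le_trans hu.2 ht.2⟩
  have hsubT : Icc c d ⊆ T := by
    intro t ht
    by_cases h : t ≤ m
    · exact h1.1 ⟨ht.1, h⟩
    · exact h2.1 ⟨le_of_not_ge h, ht.2⟩
  exact ⟨η, ⟨hsubT, ordConnected_Icc, ⟨hcm, hmd⟩, hcont, hηm,
    fun a b hab => hint.mono_set hab, heq⟩, e1, e2⟩

/-- Smallness of the primitive over short subintervals. -/
lemma small_primitive {f : ℝ → ℝ} {c d : ℝ} (hcd : c ≤ d)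
    (hf : IntegrableOn f (Icc c d)) {ε : ℝ} (hε : 0 < ε) :
    ∃ δ > 0, ∀ u v : ℝ, u ∈ Icc c d → v ∈ Icc c d → u ≤ v → v - u ≤ δ →
      ∫ t in Icc u v, f t ≤ ε := by
  set F : ℝ → ℝ := fun t => ∫ s in Icc c t, f s with hF
  have hFc : ContinuousOn F (Icc c d) := continuousOn_primitive_Icc hf
  have hUC : UniformContinuousOn F (Icc c d) :=
    isCompact_Icc.uniformContinuousOn_of_continuous hFc
  rw [Metric.uniformContinuousOn_iff] at hUC
  obtain ⟨δ, hδ, hδ'⟩ := hUC ε hε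
  refine ⟨δ / 2, by positivity, fun u v hu hv huv hlen => ?_⟩
  have hdisj : Disjoint (Icc c u) (Ioc u v) :=
    (Iic_disjoint_Ioc le_rfl).mono_left Icc_subset_Iic_self
  have hsplit : F v = F u + ∫ s in Ioc u v, f s := by
    show (∫ s in Icc c v, f s) = _
    rw [← Icc_union_Ioc_eq_Icc hu.1 huv]
    exact setIntegral_union hdisj measurableSet_Ioc
      (hf.mono_set (Icc_subset_Icc le_rfl hu.2))
      (hf.mono_set fun s hs => ⟨le_trans hu.1 (le_of_lt hs.1), le_trans hs.2 hv.2⟩)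
  have hlt : dist (F v) (F u) < ε := by
    apply hδ' v hv u hu
    rw [Real.dist_eq, abs_of_nonneg (by linarith)]
    linarith
  rw [integral_Icc_eq_integral_Ioc]
  have : F v - F u ≤ |F v - F u| := le_abs_self _
  rw [Real.dist_eq] at hlt
  have h2 : (∫ s in Ioc u v, f s) = F v - F u := by linarith [hsplit]
  linarith [abs_lt.mp hlt]


lemma uIoc_subset_Icc' {c d s t : ℝ} (hs : s ∈ Icc c d) (ht : t ∈ Icc c d) :
    Ι s t ⊆ Icc c d := fun z hz => uIcc_subset_Icc hs ht (Ioc_subset_Icc_self hz)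

/-- Comparison of two solutions with the same base point on a window with small
Lipschitz integral. -/
lemma window_compare {c d : ℝ} (hcd : c ≤ d)
    {ℓ : ℝ → ℝ} (hli : IntegrableOn ℓ (Icc c d)) (hl0 : ∀ t, 0 ≤ ℓ t)
    {K' : Set E}
    (hlb : ∀ t ∈ Icc c d, ∀ y1 ∈ K', ∀ y2 ∈ K', ‖X t y1 - X t y2‖ ≤ ℓ t * ‖y1 - y2‖)
    {η ξ : ℝ → E} (hηc : ContinuousOn η (Icc c d)) (hξc : ContinuousOn ξ (Icc c d))
    (hηK : ∀ t ∈ Icc c d, η t ∈ K') (hξK : ∀ t ∈ Icc c d, ξ t ∈ K')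
    (hintη : IntegrableOn (fun u => X u (η u)) (Icc c d))
    (hintξ : IntegrableOn (fun u => X u (ξ u)) (Icc c d))
    {t' : ℝ} (ht' : t' ∈ Icc c d)
    (hη : ∀ t ∈ Icc c d, η t = η t' + ∫ u in t'..t, X u (η u))
    (hξ : ∀ t ∈ Icc c d, ξ t = ξ t' + ∫ u in t'..t, X u (ξ u))
    (hil : ∫ t in Icc c d, ℓ t ≤ 1/4) :
    ∀ t ∈ Icc c d, ‖η t - ξ t‖ ≤ 2 * ‖η t' - ξ t'‖ := by
  set g : ℝ → ℝ := fun t => ‖η t - ξ t‖ with hg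
  have hgc : ContinuousOn g (Icc c d) := (hηc.sub hξc).norm
  obtain ⟨u, huI, hmax⟩ := isCompact_Icc.exists_isMaxOn (nonempty_Icc.mpr hcd) hgc
  set M := g u with hM
  have hM0 : 0 ≤ M := norm_nonneg _
  have hMle : ∀ t ∈ Icc c d, g t ≤ M := fun t ht => hmax ht
  have hsubI : Ι t' u ⊆ Icc c d := uIoc_subset_Icc' ht' huI
  have hsubI' : uIcc t' u ⊆ Icc c d := uIcc_subset_Icc ht' huI
  have iiη : IntervalIntegrable (fun s => X s (η s)) volume t' u :=
    (hintη.mono_set hsubI').intervalIntegrable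
  have iiξ : IntervalIntegrable (fun s => X s (ξ s)) volume t' u :=
    (hintξ.mono_set hsubI').intervalIntegrable
  have hdiff : η u - ξ u = (η t' - ξ t') + ∫ s in t'..u, (X s (η s) - X s (ξ s)) := by
    rw [integral_sub iiη iiξ, hη u huI, hξ u huI]
    abel
  have hkey : M ≤ g t' + M * (1/4) := by
    have h1 : ‖∫ s in t'..u, (X s (η s) - X s (ξ s))‖ ≤
        ∫ s in Ι t' u, ‖X s (η s) - X s (ξ s)‖ := norm_integral_le_integral_norm_uIoc
    have h2 : ∫ s in Ι t' u, ‖X s (η s) - X s (ξ s)‖ ≤ ∫ s in Ι t' u, ℓ s * M := by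
      apply setIntegral_mono_on
      · exact ((hintη.mono_set hsubI).sub (hintξ.mono_set hsubI)).norm
      · exact (hli.mono_set hsubI).mul_const M
      · exact measurableSet_uIoc
      · intro s hs
        have hsI := hsubI hs
        calc ‖X s (η s) - X s (ξ s)‖ ≤ ℓ s * ‖η s - ξ s‖ :=
            hlb s hsI _ (hηK s hsI) _ (hξK s hsI)
        _ ≤ ℓ s * M := mul_le_mul_of_nonneg_left (hMle s hsI) (hl0 s)
    have h3 : ∫ s in Ι t' u, ℓ s * M ≤ (1/4) * M := by
      rw [MeasureTheory.integral_mul_const]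
      have h4 : ∫ s in Ι t' u, ℓ s ≤ ∫ s in Icc c d, ℓ s := by
        apply setIntegral_mono_set hli
        · exact Filter.Eventually.of_forall fun s => hl0 s
        · exact HasSubset.Subset.eventuallyLE hsubI
      nlinarith
    have h5 : g u ≤ g t' + ‖∫ s in t'..u, (X s (η s) - X s (ξ s))‖ := by
      rw [hg]
      simp only []
      rw [hdiff]
      exact norm_add_le _ _
    have := le_trans h5 (by linarith : g t' + ‖∫ s in t'..u, (X s (η s) - X s (ξ s))‖ ≤
      g t' + M * (1/4))
    linarith
  have hMfin : M ≤ 2 * g t' := by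
    have hgt0 : 0 ≤ g t' := norm_nonneg _
    linarith
  intro t ht
  exact le_trans (hMle t ht) hMfin


/-- Local existence via the contraction mapping principle. -/
lemma step_exists (hT : T.OrdConnected) (hXmeas : ∀ x : E, Measurable fun t => X t x)
    (hXcont : ∀ t ∈ T, Continuous fun x => X t x)
    {c d : ℝ} (hcd : c ≤ d) (hsub : Icc c d ⊆ T)
    {K' : Set E} {h ℓ : ℝ → ℝ}
    (hhi : IntegrableOn h (Icc c d)) (hli : IntegrableOn ℓ (Icc c d))
    (hl0 : ∀ t, 0 ≤ ℓ t) (hh0 : ∀ t, 0 ≤ h t)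
    (hhb : ∀ t ∈ Icc c d, ∀ y ∈ K', ‖X t y‖ ≤ h t)
    (hlb : ∀ t ∈ Icc c d, ∀ y1 ∈ K', ∀ y2 ∈ K', ‖X t y1 - X t y2‖ ≤ ℓ t * ‖y1 - y2‖)
    {r : ℝ} (hr : 0 < r)
    (hih : ∫ t in Icc c d, h t ≤ r / 2) (hil : ∫ t in Icc c d, ℓ t ≤ 1/4)
    {t' : ℝ} (ht' : t' ∈ Icc c d) {x' : E}
    (hball : Metric.closedBall x' r ⊆ K') :
    ∃ η : ℝ → E, IsSolutionOn T X t' x' (Icc c d) η ∧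
      ∀ t ∈ Icc c d, η t ∈ Metric.closedBall x' r := by
  classical
  haveI : CompactSpace (Icc c d) := isCompact_iff_compactSpace.mp isCompact_Icc
  set B : Set E := Metric.closedBall x' r with hB
  haveI : CompleteSpace B := IsClosed.completeSpace_coe (hs := Metric.isClosed_closedBall)
  haveI : Nonempty (Icc c d) := ⟨⟨t', ht'⟩⟩
  have hx'B : x' ∈ B := Metric.mem_closedBall_self hr.le
  haveI : Nonempty C(Icc c d, B) := ⟨ContinuousMap.const _ ⟨x', hx'B⟩⟩
  set ext : C(Icc c d, B) → ℝ → E := fun η u => (η (projIcc c d hcd u) : E) with hext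
  have hextc : ∀ η, Continuous (ext η) := fun η =>
    continuous_subtype_val.comp (η.continuous.comp continuous_projIcc)
  have hextB : ∀ η u, ext η u ∈ B := fun η u => (η (projIcc c d hcd u)).2
  have hexteq : ∀ (η : C(Icc c d, B)) (u : ℝ) (hu : u ∈ Icc c d),
      ext η u = (η ⟨u, hu⟩ : E) := by
    intro η u hu
    simp [ext, projIcc_of_mem hcd hu]
  have hint : ∀ η, IntegrableOn (fun u => X u (ext η u)) (Icc c d) :=
    fun η => integrand_int hT hXmeas hXcont hsub (hextc η).continuousOn hhi
      (fun t _ => hball (hextB η t)) hhb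
  have hii : ∀ (η : C(Icc c d, B)) (s t : ℝ), s ∈ Icc c d → t ∈ Icc c d →
      IntervalIntegrable (fun u => X u (ext η u)) volume s t := fun η s t hs ht =>
    ((hint η).mono_set (uIcc_subset_Icc hs ht)).intervalIntegrable
  have hmem : ∀ (η : C(Icc c d, B)) (s : Icc c d),
      x' + (∫ u in t'..(s:ℝ), X u (ext η u)) ∈ B := by
    intro η s
    rw [hB, Metric.mem_closedBall, dist_eq_norm, add_sub_cancel_left]
    have h1 : ‖∫ u in t'..(s:ℝ), X u (ext η u)‖ ≤ ∫ u in Ι t' (s:ℝ), ‖X u (ext η u)‖ :=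
      norm_integral_le_integral_norm_uIoc
    have hsubI : Ι t' (s:ℝ) ⊆ Icc c d := uIoc_subset_Icc' ht' s.2
    have h2 : ∫ u in Ι t' (s:ℝ), ‖X u (ext η u)‖ ≤ ∫ u in Ι t' (s:ℝ), h u := by
      apply setIntegral_mono_on
      · exact ((hint η).mono_set hsubI).norm
      · exact hhi.mono_set hsubI
      · exact measurableSet_uIoc
      · intro u hu
        exact hhb u (hsubI hu) _ (hball (hextB η u))
    have h3 : ∫ u in Ι t' (s:ℝ), h u ≤ ∫ u in Icc c d, h u := by
      apply setIntegral_mono_set hhi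
      · exact Filter.Eventually.of_forall fun u => hh0 u
      · exact HasSubset.Subset.eventuallyLE hsubI
    linarith
  have Fcont : ∀ η : C(Icc c d, B),
      Continuous fun s : Icc c d => (⟨x' + ∫ u in t'..(s:ℝ), X u (ext η u), hmem η s⟩ : B) := by
    intro η
    apply Continuous.subtype_mk
    have hprim : ContinuousOn (fun b => ∫ u in t'..b, X u (ext η u)) (Icc c d) := by
      have := continuousOn_primitive_interval'
        (hii η c d ⟨le_rfl, hcd⟩ ⟨hcd, le_rfl⟩) (by rw [uIcc_of_le hcd]; exact ht')
      rwa [uIcc_of_le hcd] at this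
    exact continuous_const.add (hprim.comp_continuous continuous_subtype_val fun s => s.2)
  set F : C(Icc c d, B) → C(Icc c d, B) := fun η => ⟨_, Fcont η⟩ with hF
  have hlip : ∀ η₁ η₂ : C(Icc c d, B), dist (F η₁) (F η₂) ≤ (1/2) * dist η₁ η₂ := by
    intro η₁ η₂
    rw [ContinuousMap.dist_le (by positivity)]
    intro s
    have hsubI : Ι t' (s:ℝ) ⊆ Icc c d := uIoc_subset_Icc' ht' s.2
    have : dist (F η₁ s) (F η₂ s) =
        ‖(∫ u in t'..(s:ℝ), X u (ext η₁ u)) - ∫ u in t'..(s:ℝ), X u (ext η₂ u)‖ := by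
      rw [Subtype.dist_eq, dist_eq_norm]
      show ‖(x' + _) - (x' + _)‖ = _
      congr 1
      abel
    rw [this, ← integral_sub (hii η₁ t' s ht' s.2) (hii η₂ t' s ht' s.2)]
    have h1 : ‖∫ u in t'..(s:ℝ), (X u (ext η₁ u) - X u (ext η₂ u))‖ ≤
        ∫ u in Ι t' (s:ℝ), ‖X u (ext η₁ u) - X u (ext η₂ u)‖ :=
      norm_integral_le_integral_norm_uIoc
    have h2 : ∫ u in Ι t' (s:ℝ), ‖X u (ext η₁ u) - X u (ext η₂ u)‖ ≤
        ∫ u in Ι t' (s:ℝ), ℓ u * dist η₁ η₂ := by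
      apply setIntegral_mono_on
      · exact (((hint η₁).mono_set hsubI).sub ((hint η₂).mono_set hsubI)).norm
      · exact (hli.mono_set hsubI).mul_const _
      · exact measurableSet_uIoc
      · intro u hu
        have hb1 := hball (hextB η₁ u)
        have hb2 := hball (hextB η₂ u)
        calc ‖X u (ext η₁ u) - X u (ext η₂ u)‖ ≤ ℓ u * ‖ext η₁ u - ext η₂ u‖ :=
            hlb u (hsubI hu) _ hb1 _ hb2
        _ ≤ ℓ u * dist η₁ η₂ := by
            apply mul_le_mul_of_nonneg_left _ (hl0 u)
            have : ‖ext η₁ u - ext η₂ u‖ =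
                dist (η₁ (projIcc c d hcd u)) (η₂ (projIcc c d hcd u)) := by
              rw [Subtype.dist_eq, dist_eq_norm]
            rw [this]
            exact ContinuousMap.dist_apply_le_dist _
    have h3 : ∫ u in Ι t' (s:ℝ), ℓ u * dist η₁ η₂ ≤ (1/2) * dist η₁ η₂ := by
      rw [MeasureTheory.integral_mul_const]
      have h4 : ∫ u in Ι t' (s:ℝ), ℓ u ≤ ∫ u in Icc c d, ℓ u := by
        apply setIntegral_mono_set hli
        · exact Filter.Eventually.of_forall fun u => hl0 u
        · exact HasSubset.Subset.eventuallyLE hsubI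
      nlinarith [dist_nonneg (x := η₁) (y := η₂)]
    linarith
  have hcontr : ContractingWith (1/2 : NNReal) F := by
    constructor
    · rw [← NNReal.coe_lt_coe]
      norm_num
    · apply LipschitzWith.of_dist_le_mul
      intro a b
      have : ((1/2 : NNReal) : ℝ) = 1/2 := by norm_num
      rw [this]
      exact hlip a b
  set η₀ := ContractingWith.fixedPoint F hcontr with hη₀
  have hfix : F η₀ = η₀ := hcontr.fixedPoint_isFixedPt
  have heq : ∀ t (htm : t ∈ Icc c d), ext η₀ t = x' + ∫ u in t'..t, X u (ext η₀ u) := by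
    intro t htm
    calc ext η₀ t = ((η₀ ⟨t, htm⟩ : B) : E) := hexteq η₀ t htm
    _ = ((F η₀) ⟨t, htm⟩ : E) := by rw [hfix]
    _ = x' + ∫ u in t'..t, X u (ext η₀ u) := rfl
  have hbase : ext η₀ t' = x' := by
    rw [heq t' ht', integral_same, add_zero]
  refine ⟨ext η₀, ⟨hsub, ordConnected_Icc, ht', (hextc η₀).continuousOn, hbase,
    fun a b hab => (hint η₀).mono_set hab, fun t htm => heq t htm⟩,
    fun t _ => hextB η₀ t⟩


lemma aux_bounds
    (hXbd : ∀ a b : ℝ, Icc a b ⊆ T → ∀ K : Set E, IsCompact K →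
      ∃ h ℓ : ℝ → ℝ, IntegrableOn h (Icc a b) ∧ IntegrableOn ℓ (Icc a b) ∧
        (∀ t ∈ Icc a b, ∀ x ∈ K, ‖X t x‖ ≤ h t) ∧
        ∀ t ∈ Icc a b, ∀ x1 ∈ K, ∀ x2 ∈ K, ‖X t x1 - X t x2‖ ≤ ℓ t * ‖x1 - x2‖)
    {a b : ℝ} (hab : Icc a b ⊆ T) {K : Set E} (hK : IsCompact K) :
    ∃ h ℓ : ℝ → ℝ, IntegrableOn h (Icc a b) ∧ IntegrableOn ℓ (Icc a b) ∧
      (∀ t, 0 ≤ h t) ∧ (∀ t, 0 ≤ ℓ t) ∧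
      (∀ t ∈ Icc a b, ∀ x ∈ K, ‖X t x‖ ≤ h t) ∧
      (∀ t ∈ Icc a b, ∀ x1 ∈ K, ∀ x2 ∈ K, ‖X t x1 - X t x2‖ ≤ ℓ t * ‖x1 - x2‖) := by
  obtain ⟨h, ℓ, hi, li, hb, lb⟩ := hXbd a b hab K hK
  refine ⟨fun t => |h t|, fun t => |ℓ t|, hi.abs, li.abs,
    fun t => abs_nonneg _, fun t => abs_nonneg _, ?_, ?_⟩
  · intro t ht y hy
    exact (hb t ht y hy).trans (le_abs_self _)
  · intro t ht y1 h1 y2 h2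
    exact (lb t ht y1 h1 y2 h2).trans
      (mul_le_mul_of_nonneg_right (le_abs_self _) (norm_nonneg _))

/-- Uniqueness of solutions. -/
lemma uniq (hT : T.OrdConnected)
    (hXbd : ∀ a b : ℝ, Icc a b ⊆ T → ∀ K : Set E, IsCompact K →
      ∃ h ℓ : ℝ → ℝ, IntegrableOn h (Icc a b) ∧ IntegrableOn ℓ (Icc a b) ∧
        (∀ t ∈ Icc a b, ∀ x ∈ K, ‖X t x‖ ≤ h t) ∧
        ∀ t ∈ Icc a b, ∀ x1 ∈ K, ∀ x2 ∈ K, ‖X t x1 - X t x2‖ ≤ ℓ t * ‖x1 - x2‖)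
    (t0 : ℝ) (x : E) (J1 J2 : Set ℝ) (ξ1 ξ2 : ℝ → E)
    (hs1 : IsSolutionOn T X t0 x J1 ξ1) (hs2 : IsSolutionOn T X t0 x J2 ξ2) :
    ∀ t ∈ J1 ∩ J2, ξ1 t = ξ2 t := by
  rintro t ⟨ht1, ht2⟩
  set c := t0 ⊓ t with hc
  set d := t0 ⊔ t with hd
  have hcd : c ≤ d := le_trans inf_le_left le_sup_left
  have ht01 : t0 ∈ J1 := hs1.2.2.1
  have ht02 : t0 ∈ J2 := hs2.2.2.1
  have hIcc1 : Icc c d ⊆ J1 := hs1.2.1.uIcc_subset ht01 ht1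
  have hIcc2 : Icc c d ⊆ J2 := hs2.2.1.uIcc_subset ht02 ht2
  have hsubT : Icc c d ⊆ T := hIcc1.trans hs1.1
  have ht0cd : t0 ∈ Icc c d := ⟨inf_le_left, le_sup_left⟩
  have htcd : t ∈ Icc c d := ⟨inf_le_right, le_sup_right⟩
  have hK1 : IsCompact (ξ1 '' Icc c d) :=
    isCompact_Icc.image_of_continuousOn (hs1.2.2.2.1.mono hIcc1)
  have hK2 : IsCompact (ξ2 '' Icc c d) :=
    isCompact_Icc.image_of_continuousOn (hs2.2.2.2.1.mono hIcc2)
  set K : Set E := ξ1 '' Icc c d ∪ ξ2 '' Icc c d with hKdef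
  have hK : IsCompact K := hK1.union hK2
  obtain ⟨h, ℓ, hi, li, h0, l0, hb, lb⟩ := aux_bounds hXbd hsubT hK
  obtain ⟨δ, hδpos, hδ⟩ := small_primitive hcd li (by norm_num : (0:ℝ) < 1/4)
  set Δ := δ / 2 with hΔ
  have hΔpos : 0 < Δ := by positivity
  obtain ⟨N, hN⟩ := exists_nat_ge ((d - c) / Δ)
  have hNΔ : d - c ≤ N * Δ := by
    rw [div_le_iff₀ hΔpos] at hN
    linarith
  have claim : ∀ n : ℕ, ∀ s ∈ Icc c d, |s - t0| ≤ n * Δ → ξ1 s = ξ2 s := by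
    intro n
    induction n with
    | zero =>
      intro s hs habs
      simp only [Nat.cast_zero, zero_mul] at habs
      have hst : s = t0 := sub_eq_zero.mp (abs_nonpos_iff.mp habs)
      subst hst
      rw [hs1.2.2.2.2.1, hs2.2.2.2.2.1]
    | succ n IH =>
      intro s hs habs
      push_cast at habs
      have hnΔ : 0 ≤ (n : ℝ) * Δ := by positivity
      set m := t0 + max (min (s - t0) ((n:ℝ) * Δ)) (-((n:ℝ) * Δ)) with hm
      have h1abs := (abs_le.mp habs).1
      have h2abs := (abs_le.mp habs).2
      have hmfacts : |m - t0| ≤ (n:ℝ) * Δ ∧ |s - m| ≤ Δ ∧ m ∈ Icc c d := by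
        rcases le_total (s - t0) ((n:ℝ) * Δ) with hA | hA
        · rcases le_total (-((n:ℝ) * Δ)) (s - t0) with hB | hB
          · have hmeq : m = s := by
              rw [hm, min_eq_left hA, max_eq_left hB]; ring
            rw [hmeq]
            refine ⟨by rw [abs_le]; exact ⟨hB, hA⟩, ?_, hs⟩
            rw [sub_self, abs_zero]
            exact hΔpos.le
          · have hmeq : m = t0 - (n:ℝ) * Δ := by
              rw [hm, min_eq_left hA, max_eq_right hB]; ring
            refine ⟨?_, ?_, ?_⟩
            · rw [hmeq, abs_le]
              constructor <;> [skip; skip] <;> linarith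
            · rw [hmeq, abs_le]
              constructor <;> linarith
            · rw [hmeq]
              have hsle : s ≤ t0 - (n:ℝ)*Δ := by linarith
              exact ⟨by linarith [hs.1], by linarith [ht0cd.2]⟩
        · have hB : -((n:ℝ) * Δ) ≤ (n:ℝ) * Δ := by linarith
          have hmeq : m = t0 + (n:ℝ) * Δ := by
            rw [hm, min_eq_right hA, max_eq_left hB]
          refine ⟨?_, ?_, ?_⟩
          · rw [hmeq, abs_le]
            constructor <;> linarith
          · rw [hmeq, abs_le]
            constructor <;> linarith
          · rw [hmeq]
            have hsge : t0 + (n:ℝ)*Δ ≤ s := by linarith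
            exact ⟨by linarith [ht0cd.1], by linarith [hs.2]⟩
      obtain ⟨hmn, hsm, hmcd⟩ := hmfacts
      have hmeq12 : ξ1 m = ξ2 m := IH m hmcd hmn
      set a' := max c (m - Δ) with ha'
      set b' := min d (m + Δ) with hb'
      have hca' : c ≤ a' := le_max_left _ _
      have hb'd : b' ≤ d := min_le_left _ _
      have hcb' : c ≤ b' := le_min hcd (by linarith [hmcd.1])
      have ha'd : a' ≤ d := max_le hcd (by linarith [hmcd.2])
      have ha'b' : a' ≤ b' := max_le hcb' (le_min (by linarith [hmcd.2]) (by linarith))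
      have hwsub : Icc a' b' ⊆ Icc c d := fun z hz =>
        ⟨le_trans hca' hz.1, le_trans hz.2 hb'd⟩
      have hm_w : m ∈ Icc a' b' := ⟨max_le hmcd.1 (by linarith), le_min hmcd.2 (by linarith)⟩
      have hsmlo := (abs_le.mp hsm).1
      have hsmhi := (abs_le.mp hsm).2
      have hs_w : s ∈ Icc a' b' :=
        ⟨max_le hs.1 (by linarith), le_min hs.2 (by linarith)⟩
      have hil : ∫ u in Icc a' b', ℓ u ≤ 1/4 := by
        apply hδ a' b' ⟨hca', ha'd⟩ ⟨hcb', hb'd⟩ ha'b'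
        have h5 : m - Δ ≤ a' := le_max_right _ _
        have h6 : b' ≤ m + Δ := min_le_right _ _
        rw [hΔ] at h5 h6
        linarith
      have hcmp := window_compare (X := X) ha'b' (li.mono_set hwsub) l0
        (fun z hz y1 hy1 y2 hy2 => lb z (hwsub hz) y1 hy1 y2 hy2)
        (hs1.2.2.2.1.mono (hwsub.trans hIcc1)) (hs2.2.2.2.1.mono (hwsub.trans hIcc2))
        (fun z hz => mem_union_left _ (mem_image_of_mem ξ1 (hwsub hz)))
        (fun z hz => mem_union_right _ (mem_image_of_mem ξ2 (hwsub hz)))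
        (hs1.2.2.2.2.2.1 a' b' (hwsub.trans hIcc1))
        (hs2.2.2.2.2.2.1 a' b' (hwsub.trans hIcc2))
        hm_w
        (fun z hz => IsSolutionOn.shift hs1 (hIcc1 (hwsub hm_w)) (hIcc1 (hwsub hz)))
        (fun z hz => IsSolutionOn.shift hs2 (hIcc2 (hwsub hm_w)) (hIcc2 (hwsub hz)))
        hil
      have := hcmp s hs_w
      rw [hmeq12, sub_self, norm_zero] at this
      have hnorm : ‖ξ1 s - ξ2 s‖ ≤ 0 := by linarith
      exact sub_eq_zero.mp (norm_le_zero_iff.mp hnorm)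
  apply claim N t htcd
  have h7 : |t - t0| ≤ d - c := by
    rw [abs_le]
    exact ⟨by linarith [htcd.1, ht0cd.2], by linarith [htcd.2, ht0cd.1]⟩
  linarith


/-- The tube lemma: solutions exist on all of `[c,d]` for initial data close to a
reference solution, and stay close to it. -/
lemma tube (hT : T.OrdConnected) (hXmeas : ∀ x : E, Measurable fun t => X t x)
    (hXcont : ∀ t ∈ T, Continuous fun x => X t x)
    (hXbd : ∀ a b : ℝ, Icc a b ⊆ T → ∀ K : Set E, IsCompact K →
      ∃ h ℓ : ℝ → ℝ, IntegrableOn h (Icc a b) ∧ IntegrableOn ℓ (Icc a b) ∧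
        (∀ t ∈ Icc a b, ∀ x ∈ K, ‖X t x‖ ≤ h t) ∧
        ∀ t ∈ Icc a b, ∀ x1 ∈ K, ∀ x2 ∈ K, ‖X t x1 - X t x2‖ ≤ ℓ t * ‖x1 - x2‖)
    {t0 : ℝ} {x : E} {J : Set ℝ} {ξ₀ : ℝ → E} (hsol : IsSolutionOn T X t0 x J ξ₀)
    {c d : ℝ} (hcd : c ≤ d) (hsub : Icc c d ⊆ J) {ρ : ℝ} (hρ : 0 < ρ) :
    ∃ ε > 0, ∀ t' ∈ Icc c d, ∀ x' : E, ‖x' - ξ₀ t'‖ < ε →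
      ∃ η, IsSolutionOn T X t' x' (Icc c d) η ∧ ∀ t ∈ Icc c d, ‖η t - ξ₀ t‖ < ρ := by
  classical
  have hsubT : Icc c d ⊆ T := hsub.trans hsol.1
  set K : Set E := ξ₀ '' Icc c d with hKdef
  have hKcpt : IsCompact K := isCompact_Icc.image_of_continuousOn (hsol.2.2.2.1.mono hsub)
  set K₂ : Set E := (fun p : E × E => p.1 + p.2) '' (K ×ˢ Metric.closedBall (0:E) 2) with hK₂def
  have hK₂cpt : IsCompact K₂ :=
    (hKcpt.prod (isCompact_closedBall (0:E) 2)).image continuous_add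
  have hK₂mem : ∀ {y z : E}, z ∈ K → ‖y - z‖ ≤ 2 → y ∈ K₂ := by
    intro y z hz hyz
    refine ⟨(z, y - z), ⟨hz, ?_⟩, by simp⟩
    rw [Metric.mem_closedBall, dist_zero_right]
    exact hyz
  have hKK₂ : K ⊆ K₂ := fun z hz => hK₂mem hz (by simp)
  obtain ⟨h, ℓ, hhi, hli, hh0, hl0, hhb, hlb⟩ := aux_bounds hXbd hsubT hK₂cpt
  obtain ⟨δh, hδhpos, hδh⟩ := small_primitive hcd hhi (by norm_num : (0:ℝ) < 1/4)
  obtain ⟨δl, hδlpos, hδl⟩ := small_primitive hcd hli (by norm_num : (0:ℝ) < 1/4)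
  set Δ := min δh δl with hΔdef
  have hΔpos : 0 < Δ := lt_min hδhpos hδlpos
  obtain ⟨N, hN⟩ := exists_nat_ge ((d - c) / Δ)
  have hNΔ : d - c ≤ N * Δ := by
    rw [div_le_iff₀ hΔpos] at hN
    linarith
  set ε := min ρ 1 / (2 * 2 ^ N) with hεdef
  have hεpos : 0 < ε := by
    apply div_pos (lt_min hρ one_pos)
    positivity
  have hkey : (2:ℝ) ^ N * ε = min ρ 1 / 2 := by
    rw [hεdef, mul_div_assoc', div_eq_div_iff (by positivity) (by norm_num)]
    ring
  have hhalf : (2:ℝ) ^ N * ε ≤ 1 / 2 := by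
    rw [hkey]
    have := min_le_right ρ 1
    linarith
  -- integral bound over short windows
  have hwin : ∀ u v : ℝ, u ∈ Icc c d → v ∈ Icc c d → u ≤ v → v - u ≤ Δ →
      (∫ t in Icc u v, h t ≤ 1/4) ∧ (∫ t in Icc u v, ℓ t ≤ 1/4) := by
    intro u v hu hv huv hlen
    exact ⟨hδh u v hu hv huv (le_trans hlen (min_le_left _ _)),
      hδl u v hu hv huv (le_trans hlen (min_le_right _ _))⟩
  refine ⟨ε, hεpos, ?_⟩
  intro t' ht' x' hx'
  set e' := ‖x' - ξ₀ t'‖ with he'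
  have he'0 : 0 ≤ e' := norm_nonneg _
  -- the inductive construction
  have claim : ∀ n : ℕ,
      ∃ η, IsSolutionOn T X t' x' (Icc (max c (t' - n * Δ)) (min d (t' + n * Δ))) η ∧
        ∀ t ∈ Icc (max c (t' - n * Δ)) (min d (t' + n * Δ)),
          ‖η t - ξ₀ t‖ ≤ 2 ^ n * e' := by
    intro n
    induction n with
    | zero =>
      have hmax0 : max c (t' - (0:ℕ) * Δ) = t' := by
        push_cast
        rw [zero_mul, sub_zero]
        exact max_eq_right ht'.1
      have hmin0 : min d (t' + (0:ℕ) * Δ) = t' := by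
        push_cast
        rw [zero_mul, add_zero]
        exact min_eq_right ht'.2
      rw [hmax0, hmin0]
      refine ⟨fun _ => x', ⟨fun z hz => hsubT ⟨le_trans ht'.1 hz.1, le_trans hz.2 ht'.2⟩,
        ordConnected_Icc, ⟨le_rfl, le_rfl⟩, continuousOn_const, rfl, ?_, ?_⟩, ?_⟩
      · intro a b hab
        have hnull : volume (Icc a b) = 0 := by
          apply measure_mono_null hab
          rw [Icc_self]
          exact measure_singleton t'
        rw [IntegrableOn, Measure.restrict_eq_zero.mpr hnull]
        exact integrable_zero_measure
      · intro t htm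
        have : t = t' := le_antisymm htm.2 htm.1
        subst this
        rw [integral_same, add_zero]
      · intro t htm
        have : t = t' := le_antisymm htm.2 htm.1
        subst this
        simp [he'0, he']
    | succ n IH =>
      obtain ⟨ηn, hηnsol, hηnbd⟩ := IH
      push_cast
      set an := max c (t' - (n:ℝ) * Δ) with han
      set bn := min d (t' + (n:ℝ) * Δ) with hbn
      set an1 := max c (t' - ((n:ℝ)+1) * Δ) with han1
      set bn1 := min d (t' + ((n:ℝ)+1) * Δ) with hbn1
      have hnΔ : 0 ≤ (n:ℝ) * Δ := by positivity
      have hant' : an ≤ t' := max_le ht'.1 (by linarith)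
      have ht'bn : t' ≤ bn := le_min ht'.2 (by linarith)
      have hanbn : an ≤ bn := le_trans hant' ht'bn
      have hancd : an ∈ Icc c d := ⟨le_max_left _ _, max_le hcd (by linarith [ht'.2])⟩
      have hbncd : bn ∈ Icc c d := ⟨le_min hcd (by linarith [ht'.1]), min_le_left _ _⟩
      have han1an : an1 ≤ an := max_le (le_max_left _ _)
        (le_trans (by linarith) (le_max_right c (t' - (n:ℝ) * Δ)))
      have hbnbn1 : bn ≤ bn1 := le_min (min_le_left _ _)
        (le_trans (min_le_right d _) (by linarith))
      have han1cd : an1 ∈ Icc c d := ⟨le_max_left _ _, max_le hcd (by linarith [ht'.2])⟩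
      have hbn1cd : bn1 ∈ Icc c d := ⟨le_min hcd (by linarith [ht'.1]), min_le_left _ _⟩
      have han1t' : an1 ≤ t' := le_trans han1an hant'
      have ht'bn1 : t' ≤ bn1 := le_trans ht'bn hbnbn1
      -- entry error bounds
      have hentry_b : ‖ηn bn - ξ₀ bn‖ ≤ 2 ^ n * e' := hηnbd bn ⟨hanbn, le_rfl⟩
      have hentry_a : ‖ηn an - ξ₀ an‖ ≤ 2 ^ n * e' := hηnbd an ⟨le_rfl, hanbn⟩
      have hE : ∀ k : ℕ, k ≤ N → (2:ℝ) ^ k * e' ≤ 1 / 2 := by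
        intro k hk
        have h1 : (2:ℝ) ^ k * e' ≤ 2 ^ k * ε :=
          mul_le_mul_of_nonneg_left hx'.le (by positivity)
        have h2 : (2:ℝ) ^ k * ε ≤ 2 ^ N * ε :=
          mul_le_mul_of_nonneg_right (pow_le_pow_right₀ (by norm_num) hk) hεpos.le
        linarith
      have hmono : (2:ℝ) ^ n * e' ≤ 2 ^ (n+1) * e' :=
        mul_le_mul_of_nonneg_right (pow_le_pow_right₀ (by norm_num) (Nat.le_succ n)) he'0
      -- Step 1: extension to the right, giving a solution on `Icc an bn1`.
      have hright : ∃ η, IsSolutionOn T X t' x' (Icc an bn1) η ∧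
          (∀ t ∈ Icc an bn1, ‖η t - ξ₀ t‖ ≤ 2 ^ (n+1) * e') ∧
          (∀ t ∈ Icc an bn, η t = ηn t) := by
        by_cases hR : bn < d
        · have hlt : t' + (n:ℝ) * Δ < d := by
            by_contra hge
            push_neg at hge
            rw [hbn, min_eq_left hge] at hR
            exact lt_irrefl d hR
          have hbneq : bn = t' + (n:ℝ) * Δ := by rw [hbn, min_eq_right hlt.le]
          have hnN : n < N := by
            have h1 : (n:ℝ) * Δ < (N:ℝ) * Δ := by linarith [ht'.1]
            exact_mod_cast lt_of_mul_lt_mul_right h1 hΔpos.le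
          have hPsub : Icc bn bn1 ⊆ Icc c d := fun z hz =>
            ⟨le_trans hbncd.1 hz.1, le_trans hz.2 hbn1cd.2⟩
          have hPsubT : Icc bn bn1 ⊆ T := hPsub.trans hsubT
          have hlenP : bn1 - bn ≤ Δ := by
            have := min_le_right d (t' + ((n:ℝ)+1) * Δ)
            rw [hbneq]
            linarith
          obtain ⟨hPh, hPl⟩ := hwin bn bn1 hbncd hbn1cd hbnbn1 hlenP
          have hsm : (2:ℝ) ^ n * e' ≤ 1/2 := hE n hnN.le
          have hz_ball : Metric.closedBall (ηn bn) (1/2) ⊆ K₂ := by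
            intro y hy
            rw [Metric.mem_closedBall, dist_eq_norm] at hy
            apply hK₂mem (mem_image_of_mem ξ₀ hbncd)
            calc ‖y - ξ₀ bn‖ = ‖(y - ηn bn) + (ηn bn - ξ₀ bn)‖ := by rw [sub_add_sub_cancel]
            _ ≤ ‖y - ηn bn‖ + ‖ηn bn - ξ₀ bn‖ := norm_add_le _ _
            _ ≤ 2 := by linarith
          obtain ⟨ηr, hηrsol, hηrball⟩ := step_exists hT hXmeas hXcont hbnbn1 hPsubT
            (hhi.mono_set hPsub) (hli.mono_set hPsub) hl0 hh0
            (fun z hz y hy => hhb z (hPsub hz) y hy)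
            (fun z hz y1 hy1 y2 hy2 => hlb z (hPsub hz) y1 hy1 y2 hy2)
            (by norm_num : (0:ℝ) < 1/2) (by linarith) hPl
            (⟨le_rfl, hbnbn1⟩ : bn ∈ Icc bn bn1) hz_ball
          have hrbase : ηr bn = ηn bn := hηrsol.2.2.2.2.1
          have hcmp := window_compare (X := X) hbnbn1 (hli.mono_set hPsub) hl0
            (fun z hz y1 hy1 y2 hy2 => hlb z (hPsub hz) y1 hy1 y2 hy2)
            hηrsol.2.2.2.1 (hsol.2.2.2.1.mono (hPsub.trans hsub))
            (fun z hz => hz_ball (hηrball z hz))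
            (fun z hz => hKK₂ (mem_image_of_mem ξ₀ (hPsub hz)))
            (hηrsol.2.2.2.2.2.1 bn bn1 subset_rfl)
            (hsol.2.2.2.2.2.1 bn bn1 (hPsub.trans hsub))
            (⟨le_rfl, hbnbn1⟩ : bn ∈ Icc bn bn1)
            (fun z hz => by rw [hrbase]; exact hηrsol.2.2.2.2.2.2 z hz)
            (fun z hz => IsSolutionOn.shift hsol (hsub (hPsub ⟨le_rfl, hbnbn1⟩))
              (hsub (hPsub hz)))
            hPl
          have h1g : IsSolutionOn T X bn (ηn bn) (Icc an bn) ηn := by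
            have := IsSolutionOn.rebase hηnsol (⟨hanbn, le_rfl⟩ : bn ∈ Icc an bn)
            exact this
          obtain ⟨η', hη'sol, hη'l, hη'r⟩ := glue_mid hanbn hbnbn1 h1g hηrsol
          have ht'mid : t' ∈ Icc an bn := ⟨hant', ht'bn⟩
          have hη't' : η' t' = x' := by
            rw [hη'l t' ht'mid]
            exact hηnsol.2.2.2.2.1
          refine ⟨η', hη't' ▸ IsSolutionOn.rebase hη'sol ⟨hant', ht'bn1⟩, ?_, hη'l⟩
          intro t ht
          by_cases htbn : t ≤ bn
          · rw [hη'l t ⟨ht.1, htbn⟩]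
            exact le_trans (hηnbd t ⟨ht.1, htbn⟩) hmono
          · have htP : t ∈ Icc bn bn1 := ⟨le_of_not_ge htbn, ht.2⟩
            rw [hη'r t htP]
            calc ‖ηr t - ξ₀ t‖ ≤ 2 * ‖ηr bn - ξ₀ bn‖ := hcmp t htP
            _ = 2 * ‖ηn bn - ξ₀ bn‖ := by rw [hrbase]
            _ ≤ 2 * (2 ^ n * e') := by linarith
            _ = 2 ^ (n+1) * e' := by ring
        · have hbnd : bn = d := le_antisymm (min_le_left _ _) (not_lt.mp hR)
          have hbn1bn : bn1 = bn := le_antisymm (by rw [hbnd]; exact min_le_left _ _) hbnbn1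
          rw [hbn1bn]
          exact ⟨ηn, hηnsol, fun t ht => le_trans (hηnbd t ht) hmono, fun t ht => rfl⟩
      obtain ⟨η', hη'sol, hη'bd, hη'eq⟩ := hright
      -- Step 2: extension to the left, giving a solution on `Icc an1 bn1`.
      by_cases hL : c < an
      · have hlt : c < t' - (n:ℝ) * Δ := by
          by_contra hge
          push_neg at hge
          rw [han, max_eq_left hge] at hL
          exact lt_irrefl c hL
        have haneq : an = t' - (n:ℝ) * Δ := by rw [han, max_eq_right hlt.le]
        have hnN : n < N := by
          have h1 : (n:ℝ) * Δ < (N:ℝ) * Δ := by linarith [ht'.2]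
          exact_mod_cast lt_of_mul_lt_mul_right h1 hΔpos.le
        have hPsub : Icc an1 an ⊆ Icc c d := fun z hz =>
          ⟨le_trans han1cd.1 hz.1, le_trans hz.2 hancd.2⟩
        have hPsubT : Icc an1 an ⊆ T := hPsub.trans hsubT
        have hlenP : an - an1 ≤ Δ := by
          have := le_max_right c (t' - ((n:ℝ)+1) * Δ)
          rw [haneq]
          linarith
        obtain ⟨hPh, hPl⟩ := hwin an1 an han1cd hancd han1an hlenP
        have hsm : (2:ℝ) ^ n * e' ≤ 1/2 := hE n hnN.le
        have hη'an : η' an = ηn an := hη'eq an ⟨le_rfl, hanbn⟩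
        have hz_ball : Metric.closedBall (η' an) (1/2) ⊆ K₂ := by
          intro y hy
          rw [Metric.mem_closedBall, dist_eq_norm] at hy
          apply hK₂mem (mem_image_of_mem ξ₀ hancd)
          calc ‖y - ξ₀ an‖ = ‖(y - η' an) + (η' an - ξ₀ an)‖ := by rw [sub_add_sub_cancel]
          _ ≤ ‖y - η' an‖ + ‖η' an - ξ₀ an‖ := norm_add_le _ _
          _ ≤ 2 := by rw [hη'an] at hy ⊢; linarith
        obtain ⟨ηl, hηlsol, hηlball⟩ := step_exists hT hXmeas hXcont han1an hPsubT
          (hhi.mono_set hPsub) (hli.mono_set hPsub) hl0 hh0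
          (fun z hz y hy => hhb z (hPsub hz) y hy)
          (fun z hz y1 hy1 y2 hy2 => hlb z (hPsub hz) y1 hy1 y2 hy2)
          (by norm_num : (0:ℝ) < 1/2) (by linarith) hPl
          (⟨han1an, le_rfl⟩ : an ∈ Icc an1 an) hz_ball
        have hlbase : ηl an = η' an := hηlsol.2.2.2.2.1
        have hcmp := window_compare (X := X) han1an (hli.mono_set hPsub) hl0
          (fun z hz y1 hy1 y2 hy2 => hlb z (hPsub hz) y1 hy1 y2 hy2)
          hηlsol.2.2.2.1 (hsol.2.2.2.1.mono (hPsub.trans hsub))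
          (fun z hz => hz_ball (hηlball z hz))
          (fun z hz => hKK₂ (mem_image_of_mem ξ₀ (hPsub hz)))
          (hηlsol.2.2.2.2.2.1 an1 an subset_rfl)
          (hsol.2.2.2.2.2.1 an1 an (hPsub.trans hsub))
          (⟨han1an, le_rfl⟩ : an ∈ Icc an1 an)
          (fun z hz => by rw [hlbase]; exact hηlsol.2.2.2.2.2.2 z hz)
          (fun z hz => IsSolutionOn.shift hsol (hsub (hPsub ⟨han1an, le_rfl⟩))
            (hsub (hPsub hz)))
          hPl
        have h1g : IsSolutionOn T X an (ηl an) (Icc an1 an) ηl :=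
          IsSolutionOn.rebase hηlsol (⟨han1an, le_rfl⟩ : an ∈ Icc an1 an)
        have h2g : IsSolutionOn T X an (ηl an) (Icc an bn1) η' := by
          rw [hlbase]
          exact IsSolutionOn.rebase hη'sol ⟨le_rfl, le_trans hanbn hbnbn1⟩
        obtain ⟨η'', hη''sol, hη''l, hη''r⟩ := glue_mid han1an (le_trans hanbn hbnbn1) h1g h2g
        have ht'mid : t' ∈ Icc an bn1 := ⟨hant', ht'bn1⟩
        have hη''t' : η'' t' = x' := by
          rw [hη''r t' ht'mid, hη'eq t' ⟨hant', ht'bn⟩]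
          exact hηnsol.2.2.2.2.1
        refine ⟨η'', hη''t' ▸ IsSolutionOn.rebase hη''sol ⟨han1t', ht'bn1⟩, ?_⟩
        intro t ht
        by_cases htan : an ≤ t
        · rw [hη''r t ⟨htan, ht.2⟩]
          exact hη'bd t ⟨htan, ht.2⟩
        · have htP : t ∈ Icc an1 an := ⟨ht.1, le_of_not_ge htan⟩
          rw [hη''l t htP]
          calc ‖ηl t - ξ₀ t‖ ≤ 2 * ‖ηl an - ξ₀ an‖ := hcmp t htP
          _ = 2 * ‖ηn an - ξ₀ an‖ := by rw [hlbase, hη'an]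
          _ ≤ 2 * (2 ^ n * e') := by linarith
          _ = 2 ^ (n+1) * e' := by ring
      · have hand : an = c := le_antisymm (not_lt.mp hL) (le_max_left _ _)
        have han1eq : an1 = an := le_antisymm han1an (by rw [hand]; exact le_max_left _ _)
        rw [han1eq]
        exact ⟨η', hη'sol, hη'bd⟩
  -- conclusion from `claim N`
  obtain ⟨η, hηsol, hηbd⟩ := claim N
  have hNmax : max c (t' - (N:ℝ) * Δ) = c := max_eq_left (by linarith [ht'.2])
  have hNmin : min d (t' + (N:ℝ) * Δ) = d := min_eq_left (by linarith [ht'.1])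
  rw [hNmax, hNmin] at hηsol hηbd
  refine ⟨η, hηsol, fun t ht => ?_⟩
  calc ‖η t - ξ₀ t‖ ≤ 2 ^ N * e' := hηbd t ht
  _ < 2 ^ N * ε := mul_lt_mul_of_pos_left hx' (by positivity)
  _ = min ρ 1 / 2 := hkey
  _ < ρ := by
      have := min_le_left ρ 1
      linarith


/-- Extend a solution slightly beyond `uIcc t0 t1` inside `T`, when possible. -/
lemma extend_slightly (hT : T.OrdConnected) (hXmeas : ∀ x : E, Measurable fun t => X t x)
    (hXcont : ∀ t ∈ T, Continuous fun x => X t x)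
    (hXbd : ∀ a b : ℝ, Icc a b ⊆ T → ∀ K : Set E, IsCompact K →
      ∃ h ℓ : ℝ → ℝ, IntegrableOn h (Icc a b) ∧ IntegrableOn ℓ (Icc a b) ∧
        (∀ t ∈ Icc a b, ∀ x ∈ K, ‖X t x‖ ≤ h t) ∧
        ∀ t ∈ Icc a b, ∀ x1 ∈ K, ∀ x2 ∈ K, ‖X t x1 - X t x2‖ ≤ ℓ t * ‖x1 - x2‖)
    {t0 t1 : ℝ} {x : E} {J : Set ℝ} {ξ : ℝ → E}
    (hsol : IsSolutionOn T X t0 x J ξ) (ht1 : t1 ∈ J) :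
    ∃ (c d : ℝ) (ξ' : ℝ → E) (ε₁ : ℝ), 0 < ε₁ ∧ c ≤ d ∧ t0 ∈ Icc c d ∧ t1 ∈ Icc c d ∧
      IsSolutionOn T X t0 x (Icc c d) ξ' ∧
      (∀ s ∈ T, |s - t0| < ε₁ → s ∈ Icc c d) ∧
      (∀ s ∈ T, |s - t1| < ε₁ → s ∈ Icc c d) := by
  classical
  set c₀ := t0 ⊓ t1 with hc₀
  set d₀ := t0 ⊔ t1 with hd₀
  have hc₀d₀ : c₀ ≤ d₀ := le_trans inf_le_left le_sup_left
  have ht0J : t0 ∈ J := hsol.2.2.1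
  have hIccJ : Icc c₀ d₀ ⊆ J := hsol.2.1.uIcc_subset ht0J ht1
  have ht0cd : t0 ∈ Icc c₀ d₀ := ⟨inf_le_left, le_sup_left⟩
  have ht1cd : t1 ∈ Icc c₀ d₀ := ⟨inf_le_right, le_sup_right⟩
  have hres : IsSolutionOn T X t0 x (Icc c₀ d₀) ξ :=
    IsSolutionOn.mono hsol hIccJ ordConnected_Icc ht0cd
  have hc₀T : c₀ ∈ T := hres.1 ⟨le_rfl, hc₀d₀⟩
  have hd₀T : d₀ ∈ T := hres.1 ⟨hc₀d₀, le_rfl⟩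
  -- a generic one-sided extension step (stated for the left end)
  have hstepL : ∀ (ζ : ℝ → E), IsSolutionOn T X t0 x (Icc c₀ d₀) ζ →
      ∀ s ∈ T, s < c₀ → ∃ c, s ≤ c ∧ c < c₀ ∧
        ∃ ζ', IsSolutionOn T X t0 x (Icc c d₀) ζ' := by
    intro ζ hζ s hsT hs
    have hsc₀T : Icc s c₀ ⊆ T := hT.out hsT hc₀T
    obtain ⟨h, ℓ, hhi, hli, hh0, hl0, hhb, hlb⟩ := aux_bounds hXbd hsc₀T
      (isCompact_closedBall (ζ c₀) (1/2))
    obtain ⟨δh, hδhpos, hδh⟩ := small_primitive hs.le hhi (by norm_num : (0:ℝ) < 1/4)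
    obtain ⟨δl, hδlpos, hδl⟩ := small_primitive hs.le hli (by norm_num : (0:ℝ) < 1/4)
    set δ := min (min δh δl) (c₀ - s) with hδdef
    have hδpos : 0 < δ := lt_min (lt_min hδhpos hδlpos) (by linarith)
    set c := c₀ - δ with hcdef
    have hsc : s ≤ c := by
      have := min_le_right (min δh δl) (c₀ - s)
      rw [hcdef]
      linarith
    have hcc₀ : c < c₀ := by rw [hcdef]; linarith
    have hsubP : Icc c c₀ ⊆ Icc s c₀ := Icc_subset_Icc hsc le_rfl
    have hcmem : c ∈ Icc s c₀ := ⟨hsc, hcc₀.le⟩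
    have hc₀mem : c₀ ∈ Icc s c₀ := ⟨hs.le, le_rfl⟩
    have hlen : c₀ - c ≤ min δh δl := by
      rw [hcdef]
      have := min_le_left (min δh δl) (c₀ - s)
      linarith
    obtain ⟨ηl, hηlsol, _⟩ := step_exists hT hXmeas hXcont hcc₀.le
      (fun z hz => hsc₀T (hsubP hz))
      (hhi.mono_set hsubP) (hli.mono_set hsubP) hl0 hh0
      (fun z hz y hy => hhb z (hsubP hz) y hy)
      (fun z hz y1 hy1 y2 hy2 => hlb z (hsubP hz) y1 hy1 y2 hy2)
      (by norm_num : (0:ℝ) < 1/2)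
      (by
        have := hδh c c₀ hcmem hc₀mem hcc₀.le (le_trans hlen (min_le_left _ _))
        linarith)
      (hδl c c₀ hcmem hc₀mem hcc₀.le (le_trans hlen (min_le_right _ _)))
      (⟨hcc₀.le, le_rfl⟩ : c₀ ∈ Icc c c₀) subset_rfl
    have h1g : IsSolutionOn T X c₀ (ηl c₀) (Icc c c₀) ηl :=
      IsSolutionOn.rebase hηlsol ⟨hcc₀.le, le_rfl⟩
    have h2g : IsSolutionOn T X c₀ (ηl c₀) (Icc c₀ d₀) ζ := by
      rw [hηlsol.2.2.2.2.1]
      exact IsSolutionOn.rebase hζ ⟨le_rfl, hc₀d₀⟩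
    obtain ⟨ζ', hζ'sol, hζ'l, hζ'r⟩ := glue_mid hcc₀.le hc₀d₀ h1g h2g
    have hζ't0 : ζ' t0 = x := by
      rw [hζ'r t0 ht0cd]
      exact hζ.2.2.2.2.1
    exact ⟨c, hsc, hcc₀, ζ', hζ't0 ▸ IsSolutionOn.rebase hζ'sol
      ⟨le_trans hcc₀.le ht0cd.1, ht0cd.2⟩⟩
  -- a generic one-sided extension step for the right end
  have hstepR : ∀ (c : ℝ) (ζ : ℝ → E), c ≤ c₀ → IsSolutionOn T X t0 x (Icc c d₀) ζ →
      ∀ s ∈ T, d₀ < s → ∃ d, d ≤ s ∧ d₀ < d ∧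
        ∃ ζ', IsSolutionOn T X t0 x (Icc c d) ζ' := by
    intro c ζ hcc₀ hζ s hsT hs
    have hd₀sT : Icc d₀ s ⊆ T := hT.out hd₀T hsT
    obtain ⟨h, ℓ, hhi, hli, hh0, hl0, hhb, hlb⟩ := aux_bounds hXbd hd₀sT
      (isCompact_closedBall (ζ d₀) (1/2))
    obtain ⟨δh, hδhpos, hδh⟩ := small_primitive hs.le hhi (by norm_num : (0:ℝ) < 1/4)
    obtain ⟨δl, hδlpos, hδl⟩ := small_primitive hs.le hli (by norm_num : (0:ℝ) < 1/4)
    set δ := min (min δh δl) (s - d₀) with hδdef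
    have hδpos : 0 < δ := lt_min (lt_min hδhpos hδlpos) (by linarith)
    set d := d₀ + δ with hddef
    have hds : d ≤ s := by
      have := min_le_right (min δh δl) (s - d₀)
      rw [hddef]
      linarith
    have hd₀d : d₀ < d := by rw [hddef]; linarith
    have hsubP : Icc d₀ d ⊆ Icc d₀ s := Icc_subset_Icc le_rfl hds
    have hdmem : d ∈ Icc d₀ s := ⟨hd₀d.le, hds⟩
    have hd₀mem : d₀ ∈ Icc d₀ s := ⟨le_rfl, hs.le⟩
    have hlen : d - d₀ ≤ min δh δl := by
      rw [hddef]
      have := min_le_left (min δh δl) (s - d₀)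
      linarith
    obtain ⟨ηr, hηrsol, _⟩ := step_exists hT hXmeas hXcont hd₀d.le
      (fun z hz => hd₀sT (hsubP hz))
      (hhi.mono_set hsubP) (hli.mono_set hsubP) hl0 hh0
      (fun z hz y hy => hhb z (hsubP hz) y hy)
      (fun z hz y1 hy1 y2 hy2 => hlb z (hsubP hz) y1 hy1 y2 hy2)
      (by norm_num : (0:ℝ) < 1/2)
      (by
        have := hδh d₀ d hd₀mem hdmem hd₀d.le (le_trans hlen (min_le_left _ _))
        linarith)
      (hδl d₀ d hd₀mem hdmem hd₀d.le (le_trans hlen (min_le_right _ _)))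
      (⟨le_rfl, hd₀d.le⟩ : d₀ ∈ Icc d₀ d) subset_rfl
    have h1g : IsSolutionOn T X d₀ (ζ d₀) (Icc c d₀) ζ :=
      IsSolutionOn.rebase hζ ⟨le_trans hcc₀ hc₀d₀, le_rfl⟩
    have h2g : IsSolutionOn T X d₀ (ζ d₀) (Icc d₀ d) ηr := hηrsol
    obtain ⟨ζ', hζ'sol, hζ'l, hζ'r⟩ := glue_mid (le_trans hcc₀ hc₀d₀) hd₀d.le h1g h2g
    have hζ't0 : ζ' t0 = x := by
      rw [hζ'l t0 ⟨le_trans hcc₀ ht0cd.1, ht0cd.2⟩]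
      exact hζ.2.2.2.2.1
    exact ⟨d, hds, hd₀d, ζ', hζ't0 ▸ IsSolutionOn.rebase hζ'sol
      ⟨le_trans hcc₀ ht0cd.1, le_trans ht0cd.2 hd₀d.le⟩⟩
  -- perform the left extension
  have hLres : ∃ c, c ≤ c₀ ∧ (∃ ζ, IsSolutionOn T X t0 x (Icc c d₀) ζ) ∧
      ∃ εL > 0, ∀ s ∈ T, c₀ - εL < s → c ≤ s := by
    by_cases HL : ∃ s ∈ T, s < c₀
    · obtain ⟨s, hsT, hs⟩ := HL
      obtain ⟨c, hsc, hcc₀, ζ', hζ'⟩ := hstepL ξ hres s hsT hs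
      exact ⟨c, hcc₀.le, ⟨ζ', hζ'⟩, c₀ - c, by linarith, fun z hz hz' => by linarith⟩
    · push_neg at HL
      exact ⟨c₀, le_rfl, ⟨ξ, hres⟩, 1, one_pos, fun z hz _ => HL z hz⟩
  obtain ⟨c, hcc₀, ⟨ζ, hζ⟩, εL, hεLpos, hεL⟩ := hLres
  -- perform the right extension
  have hRres : ∃ d, d₀ ≤ d ∧ (∃ ζ', IsSolutionOn T X t0 x (Icc c d) ζ') ∧
      ∃ εR > 0, ∀ s ∈ T, s < d₀ + εR → s ≤ d := by
    by_cases HR : ∃ s ∈ T, d₀ < s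
    · obtain ⟨s, hsT, hs⟩ := HR
      obtain ⟨d, hds, hd₀d, ζ', hζ'⟩ := hstepR c ζ hcc₀ hζ s hsT hs
      exact ⟨d, hd₀d.le, ⟨ζ', hζ'⟩, d - d₀, by linarith, fun z hz hz' => by linarith⟩
    · push_neg at HR
      exact ⟨d₀, le_rfl, ⟨ζ, hζ⟩, 1, one_pos, fun z hz _ => HR z hz⟩
  obtain ⟨d, hd₀d, ⟨ζ', hζ'⟩, εR, hεRpos, hεR⟩ := hRres
  refine ⟨c, d, ζ', min εL εR, lt_min hεLpos hεRpos, le_trans (le_trans hcc₀ hc₀d₀) hd₀d,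
    ⟨le_trans hcc₀ ht0cd.1, le_trans ht0cd.2 hd₀d⟩,
    ⟨le_trans hcc₀ ht1cd.1, le_trans ht1cd.2 hd₀d⟩, hζ', ?_, ?_⟩
  · intro s hsT habs
    have h1 := (abs_lt.mp habs).1
    have h2 := (abs_lt.mp habs).2
    have hεL' : min εL εR ≤ εL := min_le_left _ _
    have hεR' : min εL εR ≤ εR := min_le_right _ _
    constructor
    · exact hεL s hsT (by linarith [ht0cd.1])
    · exact hεR s hsT (by linarith [ht0cd.2])
  · intro s hsT habs
    have h1 := (abs_lt.mp habs).1
    have h2 := (abs_lt.mp habs).2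
    have hεL' : min εL εR ≤ εL := min_le_left _ _
    have hεR' : min εL εR ≤ εR := min_le_right _ _
    constructor
    · exact hεL s hsT (by linarith [ht1cd.1])
    · exact hεR s hsT (by linarith [ht1cd.2])


end Aux

theorem flow_domain_open_and_flow_continuous
    {E : Type*} [NormedAddCommGroup E] [NormedSpace ℝ E] [FiniteDimensional ℝ E]
    [MeasurableSpace E] [BorelSpace E]
    (T : Set ℝ) (hT : T.OrdConnected) (X : ℝ → E → E)
    (hXmeas : ∀ x : E, Measurable fun t => X t x)
    (hXcont : ∀ t ∈ T, Continuous fun x => X t x)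
    (hXbd : ∀ a b : ℝ, Icc a b ⊆ T → ∀ K : Set E, IsCompact K →
      ∃ h ℓ : ℝ → ℝ, IntegrableOn h (Icc a b) ∧ IntegrableOn ℓ (Icc a b) ∧
        (∀ t ∈ Icc a b, ∀ x ∈ K, ‖X t x‖ ≤ h t) ∧
        ∀ t ∈ Icc a b, ∀ x1 ∈ K, ∀ x2 ∈ K, ‖X t x1 - X t x2‖ ≤ ℓ t * ‖x1 - x2‖) :
    (∀ (t0 : ℝ) (x : E) (J1 J2 : Set ℝ) (ξ1 ξ2 : ℝ → E),
      IsSolutionOn T X t0 x J1 ξ1 → IsSolutionOn T X t0 x J2 ξ2 →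
      ∀ t ∈ J1 ∩ J2, ξ1 t = ξ2 t) ∧
    (∃ V : Set (ℝ × ℝ × E), IsOpen V ∧
      {q : ℝ × ℝ × E | ∃ J ξ, IsSolutionOn T X q.2.1 q.2.2 J ξ ∧ q.1 ∈ J} =
        V ∩ (T ×ˢ T ×ˢ (univ : Set E))) ∧
    ∃ Φ : ℝ → ℝ → E → E,
      (∀ (t1 t0 : ℝ) (x : E) (J : Set ℝ) (ξ : ℝ → E),
        IsSolutionOn T X t0 x J ξ → t1 ∈ J → Φ t1 t0 x = ξ t1) ∧
      ContinuousOn (fun q : ℝ × ℝ × E => Φ q.1 q.2.1 q.2.2)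
        {q : ℝ × ℝ × E | ∃ J ξ, IsSolutionOn T X q.2.1 q.2.2 J ξ ∧ q.1 ∈ J} := by
  classical
  set D : Set (ℝ × ℝ × E) :=
    {q : ℝ × ℝ × E | ∃ J ξ, IsSolutionOn T X q.2.1 q.2.2 J ξ ∧ q.1 ∈ J} with hD
  have huniq := uniq hT hXbd
  -- definition of the flow
  set Φ : ℝ → ℝ → E → E := fun t1 t0 x =>
    if hq : ∃ J ξ, IsSolutionOn T X t0 x J ξ ∧ t1 ∈ J then hq.choose_spec.choose t1 else 0
    with hΦ
  have hΦdef : ∀ (t1 t0 : ℝ) (x : E) (J : Set ℝ) (ξ : ℝ → E),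
      IsSolutionOn T X t0 x J ξ → t1 ∈ J → Φ t1 t0 x = ξ t1 := by
    intro t1 t0 x J ξ hsol ht1
    have hq : ∃ J ξ, IsSolutionOn T X t0 x J ξ ∧ t1 ∈ J := ⟨J, ξ, hsol, ht1⟩
    rw [hΦ]
    simp only [dif_pos hq]
    obtain ⟨hsol', ht1'⟩ := hq.choose_spec.choose_spec
    exact huniq t0 x _ J _ ξ hsol' hsol t1 ⟨ht1', ht1⟩
  have hDsub : D ⊆ T ×ˢ T ×ˢ (univ : Set E) := by
    rintro ⟨t1, t0, x⟩ ⟨J, ξ, hsol, ht1⟩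
    refine ⟨hsol.1 ht1, hsol.1 hsol.2.2.1, trivial⟩
  -- the key quantitative neighborhood property
  have key : ∀ q ∈ D, ∀ ρ > (0:ℝ), ∃ ε > 0, ∀ q' ∈ T ×ˢ T ×ˢ (univ : Set E),
      dist q' q < ε → q' ∈ D ∧
        dist (Φ q'.1 q'.2.1 q'.2.2) (Φ q.1 q.2.1 q.2.2) < ρ := by
    rintro ⟨t1, t0, x⟩ ⟨J, ξ, hsol, ht1⟩ ρ hρ
    obtain ⟨c, d, ξ', ε₁, hε₁pos, hcd, ht0cd, ht1cd, hξ'sol, hnb0, hnb1⟩ :=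
      extend_slightly hT hXmeas hXcont hXbd hsol ht1
    obtain ⟨ε₂, hε₂pos, htube⟩ := tube hT hXmeas hXcont hXbd hξ'sol hcd subset_rfl
      (half_pos hρ)
    -- continuity of ξ' at t0 and t1 within Icc c d
    have hc0 := Metric.continuousWithinAt_iff.mp (hξ'sol.2.2.2.1 t0 ht0cd) (ε₂/2)
      (half_pos hε₂pos)
    obtain ⟨δ₃, hδ₃pos, hδ₃⟩ := hc0
    have hc1 := Metric.continuousWithinAt_iff.mp (hξ'sol.2.2.2.1 t1 ht1cd) (ρ/2)
      (half_pos hρ)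
    obtain ⟨δ₄, hδ₄pos, hδ₄⟩ := hc1
    refine ⟨min (min ε₁ (ε₂/2)) (min δ₃ δ₄), by positivity, ?_⟩
    rintro ⟨t1', t0', x'⟩ hq'T hdist
    obtain ⟨ht1'T, ht0'T, -⟩ := hq'T
    set ε := min (min ε₁ (ε₂/2)) (min δ₃ δ₄) with hε
    simp only [Prod.dist_eq] at hdist
    have hd1 : dist t1' t1 < ε := lt_of_le_of_lt (le_max_left _ _) hdist
    have hd2 : dist t0' t0 < ε :=
      lt_of_le_of_lt (le_trans (le_max_left _ _) (le_max_right _ _)) hdist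
    have hd3 : dist x' x < ε :=
      lt_of_le_of_lt (le_trans (le_max_right _ _) (le_max_right _ _)) hdist
    have hεε₁ : ε ≤ ε₁ := le_trans (min_le_left _ _) (min_le_left _ _)
    have hεε₂ : ε ≤ ε₂/2 := le_trans (min_le_left _ _) (min_le_right _ _)
    have hεδ₃ : ε ≤ δ₃ := le_trans (min_le_right _ _) (min_le_left _ _)
    have hεδ₄ : ε ≤ δ₄ := le_trans (min_le_right _ _) (min_le_right _ _)
    have ht0'cd : t0' ∈ Icc c d := hnb0 t0' ht0'T (by rw [← Real.dist_eq]; linarith)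
    have ht1'cd : t1' ∈ Icc c d := hnb1 t1' ht1'T (by rw [← Real.dist_eq]; linarith)
    have hξ't0 : ξ' t0 = x := hξ'sol.2.2.2.2.1
    have hx'close : ‖x' - ξ' t0'‖ < ε₂ := by
      have h1 : dist (ξ' t0') (ξ' t0) < ε₂/2 := hδ₃ ht0'cd (by linarith)
      calc ‖x' - ξ' t0'‖ = ‖(x' - x) + (x - ξ' t0')‖ := by rw [sub_add_sub_cancel]
      _ ≤ ‖x' - x‖ + ‖x - ξ' t0'‖ := norm_add_le _ _
      _ < ε₂ := by
          rw [dist_eq_norm, hξ't0, norm_sub_rev] at h1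
          rw [dist_eq_norm] at hd3
          linarith
    obtain ⟨η, hηsol, hηbd⟩ := htube t0' ht0'cd x' hx'close
    have hq'D : (⟨t1', t0', x'⟩ : ℝ × ℝ × E) ∈ D := ⟨Icc c d, η, hηsol, ht1'cd⟩
    refine ⟨hq'D, ?_⟩
    have hΦq' : Φ t1' t0' x' = η t1' := hΦdef t1' t0' x' (Icc c d) η hηsol ht1'cd
    have hΦq : Φ t1 t0 x = ξ' t1 := hΦdef t1 t0 x (Icc c d) ξ' hξ'sol ht1cd
    show dist (Φ t1' t0' x') (Φ t1 t0 x) < ρ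
    rw [hΦq', hΦq]
    have h1 : dist (ξ' t1') (ξ' t1) < ρ/2 := hδ₄ ht1'cd (by linarith)
    have h2 : ‖η t1' - ξ' t1'‖ < ρ/2 := hηbd t1' ht1'cd
    calc dist (η t1') (ξ' t1) ≤ dist (η t1') (ξ' t1') + dist (ξ' t1') (ξ' t1) :=
        dist_triangle _ _ _
    _ < ρ := by
        rw [dist_eq_norm]
        linarith
  refine ⟨huniq, ?_, Φ, hΦdef, ?_⟩
  · -- openness
    have key1 : ∀ q : {p : ℝ × ℝ × E // p ∈ D}, ∃ ε > 0,
        ∀ q' ∈ T ×ˢ T ×ˢ (univ : Set E), dist q' (q : ℝ × ℝ × E) < ε → q' ∈ D :=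
      fun q => by
        obtain ⟨ε, hεpos, hε⟩ := key q q.2 1 one_pos
        exact ⟨ε, hεpos, fun q' hq' hd => (hε q' hq' hd).1⟩
    choose ε0 hε0pos hε0 using key1
    refine ⟨⋃ q : {p : ℝ × ℝ × E // p ∈ D}, Metric.ball (q : ℝ × ℝ × E) (ε0 q),
      isOpen_iUnion fun q => Metric.isOpen_ball, ?_⟩
    apply Subset.antisymm
    · intro q hq
      exact ⟨mem_iUnion.mpr ⟨⟨q, hq⟩, Metric.mem_ball_self (hε0pos ⟨q, hq⟩)⟩, hDsub hq⟩
    · rintro q' ⟨hV, hTT⟩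
      obtain ⟨q, hq'⟩ := mem_iUnion.mp hV
      exact hε0 q q' hTT (Metric.mem_ball.mp hq')
  · -- continuity
    intro q hq
    apply Metric.continuousWithinAt_iff.mpr
    intro ρ hρ
    obtain ⟨ε, hεpos, hε⟩ := key q hq ρ hρ
    exact ⟨ε, hεpos, fun q' hq'D hdist => (hε q' (hDsub hq'D) hdist).2⟩
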